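/- Let G be a finite group whose order is not a prime power. Then every prime divisor of |G| divides some element of Exp_ρ(G); that is, π(G) ⊆ E(G), where E(G) is the set of all primes dividing some element of Exp_ρ(G). -/

import Mathlib

open scoped MatrixGroups

/-- `rho G` is the product of the orders of all elements of `G`. -/
noncomputable def rho (G : Type*) [Monoid G] : ℕ := ∏ᶠ g : G, orderOf g

/-- `expRho G` is the set of exponents in the prime factorization of `rho G`. -/
noncomputable def expRho (G : Type*) [Monoid G] : Finset ℕ :=
  (rho G).factorization.support.image fun p => (rho G).factorization p


open MulAction in
lemma modEq_card_fixed {X : Type*} [Finite X] {p : ℕ} (hp : p.Prime)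
    (σ : Equiv.Perm X) (hσ : σ ^ p = 1) :
    Nat.card X ≡ Nat.card {x : X // σ x = x} [MOD p] := by
  haveI : Fact p.Prime := ⟨hp⟩
  set H := Subgroup.zpowers σ with hH
  have hPG : IsPGroup p H := by
    intro h
    refine ⟨1, ?_⟩
    obtain ⟨n, hn⟩ := h.2
    have hn' : σ ^ n = (h : Equiv.Perm X) := hn
    have hcoe : ((h : Equiv.Perm X)) ^ p = 1 := by
      rw [← hn', ← zpow_natCast, ← zpow_mul, mul_comm, zpow_mul, zpow_natCast, hσ, one_zpow]
    apply Subtype.ext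
    rw [pow_one]
    push_cast
    exact hcoe
  have key := hPG.card_modEq_card_fixedPoints X
  have : Nat.card (fixedPoints H X) = Nat.card {x : X // σ x = x} := by
    apply Nat.card_congr
    apply Equiv.subtypeEquivRight
    intro x
    constructor
    · intro hx
      exact hx ⟨σ, Subgroup.mem_zpowers σ⟩
    · intro hx g
      have : H ≤ stabilizer (Equiv.Perm X) x := by
        rw [hH, Subgroup.zpowers_le]
        exact hx
      exact this g.2
  rwa [this] at key

lemma qpart_mul {G : Type*} [Group G] [Finite G] {p q k : ℕ} (hp : p.Prime) (hq : q.Prime)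
    (hne : q ≠ p) {z g : G} (hz : orderOf z = p) (hc : Commute z g) :
    q ^ k ∣ orderOf (z * g) ↔ q ^ k ∣ orderOf g := by
  have hcop : Nat.Coprime (q ^ k) p :=
    Nat.Coprime.pow_left _ ((Nat.coprime_primes hq hp).mpr hne)
  constructor
  · intro hd
    have h1 : orderOf (z * g) ∣ orderOf z * orderOf g :=
      hc.orderOf_mul_dvd_mul_orderOf
    rw [hz] at h1
    have h2 : q ^ k ∣ orderOf g * p := by
      rw [mul_comm]
      exact hd.trans h1
    exact hcop.dvd_of_dvd_mul_right h2
  · intro hd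
    have hc2 : Commute z⁻¹ (z * g) := ((Commute.refl z).mul_right hc).inv_left
    have h1 : orderOf g ∣ orderOf z⁻¹ * orderOf (z * g) := by
      have h2 := hc2.orderOf_mul_dvd_mul_orderOf
      simpa [inv_mul_cancel_left] using h2
    rw [orderOf_inv, hz] at h1
    have h2 : q ^ k ∣ orderOf (z * g) * p := by
      rw [mul_comm]
      exact hd.trans h1
    exact hcop.dvd_of_dvd_mul_right h2

lemma card_qdvd_dvd {G : Type*} [Group G] [Finite G] {p q k : ℕ} (hp : p.Prime) (hq : q.Prime)
    (hne : q ≠ p) {z : G} (hz : orderOf z = p) :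
    p ∣ Nat.card {g : G // q ^ k ∣ orderOf g} := by
  classical
  have hzp : z ^ p = 1 := by rw [← hz]; exact pow_orderOf_eq_one z
  -- Step 1: conjugation by z
  set c : Equiv.Perm G := MulAut.toPerm G (MulAut.conj z) with hcdef
  have hcapp : ∀ g : G, c g = z * g * z⁻¹ := fun g => rfl
  have hcp : c ^ p = 1 := by
    rw [hcdef, ← map_pow, ← map_pow, hzp, map_one, map_one]
  have horder : ∀ g : G, orderOf (c g) = orderOf g := fun g =>
    orderOf_injective (MulAut.conj z).toMonoidHom (MulAut.conj z).injective g
  have hiff : ∀ g : G, q ^ k ∣ orderOf g ↔ q ^ k ∣ orderOf (c g) := fun g => by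
    rw [horder g]
  set σ : Equiv.Perm {g : G // q ^ k ∣ orderOf g} := c.subtypePerm (fun g => (hiff g).symm) with hσdef
  have hσp : σ ^ p = 1 := by
    apply Equiv.ext
    intro x
    rw [hσdef, Equiv.Perm.subtypePerm_pow]
    apply Subtype.ext
    simp [hcp]
  have key1 := modEq_card_fixed hp σ hσp
  have e1 : {x : {g : G // q ^ k ∣ orderOf g} // σ x = x} ≃
      {g : G // (q ^ k ∣ orderOf g) ∧ z * g = g * z} := by
    refine (Equiv.subtypeEquivRight fun x => ?_).trans
      (Equiv.subtypeSubtypeEquivSubtypeInter _ (fun g => z * g = g * z))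
    rw [hσdef, Subtype.ext_iff]
    show c x.val = x.val ↔ z * x.val = x.val * z
    rw [hcapp, mul_inv_eq_iff_eq_mul]
  rw [Nat.card_congr e1] at key1
  -- Step 2: left multiplication by z on commuting elements
  set l : Equiv.Perm G := MulAction.toPermHom G G z with hldef
  have hlapp : ∀ g : G, l g = z * g := fun g => rfl
  have hlp : l ^ p = 1 := by rw [hldef, ← map_pow, hzp, map_one]
  have hiff2 : ∀ g : G, ((q ^ k ∣ orderOf g) ∧ z * g = g * z) ↔
      ((q ^ k ∣ orderOf (l g)) ∧ z * (l g) = (l g) * z) := by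
    intro g
    rw [hlapp]
    constructor
    · rintro ⟨h1, h2⟩
      exact ⟨(qpart_mul hp hq hne hz h2).mpr h1, (Commute.refl z).mul_right h2⟩
    · rintro ⟨h1, h2⟩
      have hcomm : z * g = g * z := by
        apply mul_left_cancel (a := z)
        rw [h2, mul_assoc]
      exact ⟨(qpart_mul hp hq hne hz hcomm).mp h1, hcomm⟩
  set σ₂ := l.subtypePerm (p := fun g : G => (q ^ k ∣ orderOf g) ∧ z * g = g * z) (fun g => (hiff2 g).symm) with hσ₂def
  have hσ₂p : σ₂ ^ p = 1 := by
    apply Equiv.ext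
    intro x
    rw [hσ₂def, Equiv.Perm.subtypePerm_pow]
    apply Subtype.ext
    simp [hlp]
  have key2 := modEq_card_fixed hp σ₂ hσ₂p
  have hempty : IsEmpty {x : {g : G // (q ^ k ∣ orderOf g) ∧ z * g = g * z} // σ₂ x = x} := by
    constructor
    rintro ⟨x, hx⟩
    rw [hσ₂def, Subtype.ext_iff] at hx
    have : z * x.val = x.val := hx
    have hz1 : z = 1 := by
      have := mul_right_cancel (b := x.val) (by rw [this, one_mul] : z * x.val = 1 * x.val)
      exact this
    rw [hz1, orderOf_one] at hz
    exact hp.one_lt.ne hz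
  have hzero : Nat.card {x : {g : G // (q ^ k ∣ orderOf g) ∧ z * g = g * z} // σ₂ x = x} = 0 :=
    @Nat.card_of_isEmpty _ hempty
  rw [hzero] at key2
  exact Nat.modEq_zero_iff_dvd.mp (key1.trans key2)

theorem primes_divide_some_exponent (G : Type*) [Group G] [Finite G]
    (h : ¬ IsPrimePow (Nat.card G)) :
    ∀ p : ℕ, p.Prime → p ∣ Nat.card G → ∃ a ∈ expRho G, p ∣ a := by
  intro p hp hpdvd
  haveI := Fintype.ofFinite G
  classical
  have hn0 : Nat.card G ≠ 0 := Nat.card_pos.ne'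
  -- find a second prime q dividing |G|
  obtain ⟨q, hq, hqdvd, hqp⟩ : ∃ q : ℕ, q.Prime ∧ q ∣ Nat.card G ∧ q ≠ p := by
    by_contra hcon
    push_neg at hcon
    apply h
    have heq : Nat.card G = p ^ (Nat.card G).primeFactorsList.length :=
      Nat.eq_prime_pow_of_unique_prime_dvd hn0 fun {d} hd hdvd => hcon d hd hdvd
    have hlen : 0 < (Nat.card G).primeFactorsList.length := by
      rcases Nat.eq_zero_or_pos (Nat.card G).primeFactorsList.length with h0 | h0
      · rw [h0, pow_zero] at heq
        rw [heq] at hpdvd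
        exact absurd (Nat.dvd_one.mp hpdvd) hp.ne_one
      · exact h0
    exact ⟨p, _, hp.prime, hlen, heq.symm⟩
  -- Cauchy: elements of order p and q
  haveI : Fact p.Prime := ⟨hp⟩
  haveI : Fact q.Prime := ⟨hq⟩
  obtain ⟨z, hz⟩ := exists_prime_orderOf_dvd_card (G := G) p
    (by rwa [← Nat.card_eq_fintype_card])
  obtain ⟨y, hy⟩ := exists_prime_orderOf_dvd_card (G := G) q
    (by rwa [← Nat.card_eq_fintype_card])
  have horder0 : ∀ g : G, orderOf g ≠ 0 := fun g => (orderOf_pos g).ne'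
  have hrho : rho G = ∏ g : G, orderOf g := finprod_eq_prod_of_fintype _
  have hfact : (rho G).factorization q = ∑ g : G, (orderOf g).factorization q := by
    rw [hrho, Nat.factorization_prod fun g _ => horder0 g, Finsupp.finset_sum_apply]
  -- the exponent is nonzero
  have hne0 : (rho G).factorization q ≠ 0 := by
    rw [hfact]
    intro h0
    have := (Finset.sum_eq_zero_iff.mp h0) y (Finset.mem_univ y)
    rw [hy, hq.factorization_self] at this
    exact one_ne_zero this
  -- the exponent as a sum of counts
  set B := Nat.card G with hB
  have hval : ∀ g : G, (orderOf g).factorization q =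
      ∑ k ∈ Finset.Icc 1 B, if q ^ k ∣ orderOf g then 1 else 0 := by
    intro g
    set v := (orderOf g).factorization q with hv
    have hvB : v ≤ B := by
      have h1 : v < orderOf g := Nat.factorization_lt q (horder0 g)
      have h2 : orderOf g ≤ B := Nat.le_of_dvd Nat.card_pos (orderOf_dvd_natCard g)
      omega
    refine Eq.symm ?_
    calc ∑ k ∈ Finset.Icc 1 B, (if q ^ k ∣ orderOf g then 1 else 0)
        = ∑ k ∈ Finset.Icc 1 B, (if k ∈ Finset.Icc 1 v then 1 else 0) := by
          refine Finset.sum_congr rfl fun k hk => ?_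
          rw [Finset.mem_Icc] at hk
          simp only [Nat.Prime.pow_dvd_iff_le_factorization hq (horder0 g),
            Finset.mem_Icc]
          simp [hk.1]
          rfl
      _ = ∑ k ∈ Finset.Icc 1 B ∩ Finset.Icc 1 v, 1 := by
          rw [Finset.sum_ite_mem]
      _ = v := by
          have hinter : Finset.Icc 1 B ∩ Finset.Icc 1 v = Finset.Icc 1 v :=
            Finset.inter_eq_right.mpr (Finset.Icc_subset_Icc_right hvB)
          rw [hinter, Finset.sum_const, Nat.card_Icc, smul_eq_mul, mul_one,
            Nat.add_sub_cancel]
  have hsum : (rho G).factorization q =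
      ∑ k ∈ Finset.Icc 1 B, Nat.card {g : G // q ^ k ∣ orderOf g} := by
    rw [hfact, Finset.sum_congr rfl fun g _ => hval g, Finset.sum_comm]
    refine Finset.sum_congr rfl fun k _ => ?_
    rw [Finset.sum_boole, Nat.card_eq_fintype_card, Fintype.card_subtype]
    norm_num
  refine ⟨(rho G).factorization q,
    Finset.mem_image.mpr ⟨q, Finsupp.mem_support_iff.mpr hne0, rfl⟩, ?_⟩
  rw [hsum]
  exact Finset.dvd_sum fun k _ => card_qdvd_dvd hp hq hqp hz
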